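/- In the setting of the randomized partition (blocks P_1, …, P_m built from independent β_1, …, β_m with density f of dist(diam(P), n)), set L = log₂ n, fix y ∈ Z and 0 ≤ r ≤ diam(P)/(16 L), and fix an index i. Let x_i = min{d(p_i, q) : q ∈ Z, d(q,y) ≤ r}. If x_i < diam(P)/8 + (L−2)·diam(P)/(8L) (i.e., p_i is 'near' the ball B(y,r)), then Pr[P_i non-terminally intersects B(y,r)] ≤ (32 r L / diam(P)) · Pr[P_i terminally intersects B(y,r)]. -/

import Mathlib

open MeasureTheory

/-- The density `f` of the distribution `dist(δ, k)` where `k = 2^L`. -/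
noncomputable def distDensity (δ : ℝ) (L : ℕ) (x : ℝ) : ℝ :=
  if x < δ/8 ∨ δ/4 < x then 0
  else if δ/4 - δ/(8*(L:ℝ)) ≤ x then (8*(L:ℝ)/δ) * (2 / 2^L)
  else (8*(L:ℝ)/δ) * (1/2 : ℝ) ^ ((⌊(x - δ/8) / (δ/(8*(L:ℝ)))⌋).toNat + 1)

def blocksAux {Z : Type} [MetricSpace Z] {m : ℕ} (P : Set Z) (p : Fin m → Z)
    (b : Fin m → ℝ) : ℕ → Set Z
  | n => {x | x ∈ P ∧ (∀ k, ∀ _ : k < n, x ∉ blocksAux P p b k) ∧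
      ∀ h : n < m, dist x (p ⟨n, h⟩) ≤ b ⟨n, h⟩}

lemma blocksAux_def {Z : Type} [MetricSpace Z] {m : ℕ} (P : Set Z) (p : Fin m → Z)
    (b : Fin m → ℝ) (n : ℕ) :
    blocksAux P p b n = {x | x ∈ P ∧ (∀ k, ∀ _ : k < n, x ∉ blocksAux P p b k) ∧
      ∀ h : n < m, dist x (p ⟨n, h⟩) ≤ b ⟨n, h⟩} := by
  rw [blocksAux]

lemma blocksAux_congr {Z : Type} [MetricSpace Z] {m : ℕ} (P : Set Z) (p : Fin m → Z) :
    ∀ (n : ℕ) (b b' : Fin m → ℝ), (∀ k : Fin m, (k : ℕ) ≤ n → b k = b' k) →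
      blocksAux P p b n = blocksAux P p b' n := by
  intro n
  induction n using Nat.strong_induction_on with
  | _ n ih =>
    intro b b' hbb
    rw [blocksAux_def, blocksAux_def]
    ext z
    simp only [Set.mem_setOf_eq]
    constructor
    · rintro ⟨h1, h2, h3⟩
      refine ⟨h1, fun k hk => ?_, fun h => ?_⟩
      · rw [← ih k hk b b' (fun j hj => hbb j (le_trans hj hk.le))]; exact h2 k hk
      · rw [← hbb ⟨n, h⟩ le_rfl]; exact h3 h
    · rintro ⟨h1, h2, h3⟩
      refine ⟨h1, fun k hk => ?_, fun h => ?_⟩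
      · rw [ih k hk b b' (fun j hj => hbb j (le_trans hj hk.le))]; exact h2 k hk
      · rw [hbb ⟨n, h⟩ le_rfl]; exact h3 h

lemma blocksAux_measurableSet {Z : Type} [MetricSpace Z] {m : ℕ} (P : Set Z) (p : Fin m → Z) :
    ∀ (n : ℕ) (z : Z), MeasurableSet {b : Fin m → ℝ | z ∈ blocksAux P p b n} := by
  intro n
  induction n using Nat.strong_induction_on with
  | _ n ih =>
    intro z
    have : {b : Fin m → ℝ | z ∈ blocksAux P p b n} =
        {b : Fin m → ℝ | z ∈ P} ∩ ((⋂ (k : ℕ) (_ : k < n), {b | z ∈ blocksAux P p b k}ᶜ) ∩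
          (⋂ (h : n < m), {b : Fin m → ℝ | dist z (p ⟨n, h⟩) ≤ b ⟨n, h⟩})) := by
      ext b
      rw [Set.mem_setOf_eq, blocksAux_def]
      simp only [Set.mem_setOf_eq, Set.mem_inter_iff, Set.mem_iInter, Set.mem_compl_iff]
    rw [this]
    refine MeasurableSet.inter ?_ (MeasurableSet.inter ?_ ?_)
    · by_cases hz : z ∈ P
      · simp [hz]
      · simp [hz]
    · exact MeasurableSet.iInter fun k => MeasurableSet.iInter fun hk => (ih k hk z).compl
    · refine MeasurableSet.iInter fun h => ?_
      have : {b : Fin m → ℝ | dist z (p ⟨n, h⟩) ≤ b ⟨n, h⟩} =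
          (fun b : Fin m → ℝ => b ⟨n, h⟩) ⁻¹' Set.Ici (dist z (p ⟨n, h⟩)) := rfl
      rw [this]
      exact (measurable_pi_apply _) measurableSet_Ici

set_option maxHeartbeats 2000000 in
/-- In the setting of the random partition (blocks `P_1, …, P_m` built from
independent `β_1, …, β_m` with density `f = distDensity (diam P) L`, where
`n = 2^L ≥ max(m,4)` is a power of two and `L = log₂ n`), fix `y ∈ Z`,
`0 ≤ r ≤ diam(P)/(16L)` and an index `i`.  Let
`x_i = min {d(p_i,q) : q ∈ Z, d(q,y) ≤ r}`.  If
`x_i < diam(P)/8 + (L-2)·diam(P)/(8L)` (i.e. `p_i` is *near* the ball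
`B(y,r)`), then
`Pr[P_i non-terminally intersects B(y,r)] ≤ (32 r L / diam P) · Pr[P_i
terminally intersects B(y,r)]`. -/
theorem near_nonterminal_le_terminal
    (Z : Type) [MetricSpace Z] [Finite Z]
    (m : ℕ) (hm : 2 ≤ m) (p : Fin m → Z) (hp : Function.Injective p)
    (P : Set Z) (hP : P = Set.range p) (hdiam : 0 < Metric.diam P)
    (L : ℕ) (hL : 2 ≤ L) (hmn : m ≤ 2^L)
    (Ω : Type) [MeasurableSpace Ω] (μ : Measure Ω) [IsProbabilityMeasure μ]
    (β : Fin m → Ω → ℝ) (hβmeas : ∀ i, Measurable (β i))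
    (hindep : ProbabilityTheory.iIndepFun β μ)
    (hlaw : ∀ i, Measure.map (β i) μ =
      volume.withDensity (fun x => ENNReal.ofReal (distDensity (Metric.diam P) L x)))
    (Pblk : Fin m → Ω → Set Z)
    (hPblk : ∀ ω i, Pblk i ω =
      {x | x ∈ P ∧ (∀ j, j < i → x ∉ Pblk j ω) ∧ dist x (p i) ≤ β i ω})
    (y : Z) (r : ℝ) (hr0 : 0 ≤ r) (hr1 : r ≤ Metric.diam P / (16 * (L:ℝ)))
    (i : Fin m)
    (hnear : sInf ((fun q => dist (p i) q) '' Metric.closedBall y r)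
      < Metric.diam P / 8 + ((L:ℝ) - 2) * (Metric.diam P / (8 * (L:ℝ)))) :
    (μ {ω | (Pblk i ω ∩ Metric.closedBall y r).Nonempty ∧
        ∃ j, i < j ∧ (Pblk j ω ∩ Metric.closedBall y r).Nonempty}).toReal
      ≤ (32 * r * (L:ℝ) / Metric.diam P) *
        (μ {ω | (Pblk i ω ∩ Metric.closedBall y r).Nonempty ∧
            ∀ j, i < j → ¬ (Pblk j ω ∩ Metric.closedBall y r).Nonempty}).toReal := by
  classical
  have hmemPblk : ∀ (ω : Ω) (j : Fin m) (z : Z), z ∈ Pblk j ω ↔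
      z ∈ P ∧ (∀ k, k < j → z ∉ Pblk k ω) ∧ dist z (p j) ≤ β j ω := by
    intro ω j z
    conv_lhs => rw [hPblk ω j]
    exact Iff.rfl
  set δ := Metric.diam P with hδ_def
  clear_value δ
  have hδ : 0 < δ := hdiam
  have hL0 : (0:ℝ) < (L:ℝ) := by exact_mod_cast (by omega : 0 < L)
  set w : ℝ := δ / (8 * (L:ℝ)) with hw_def
  clear_value w
  have hw : 0 < w := by rw [hw_def]; positivity
  have hLw : (L:ℝ) * w = δ/8 := by rw [hw_def]; field_simp
  have hq : δ/4 - w = δ/8 + ((L:ℝ)-1)*w := by nlinarith [hLw]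
  have hcw : (8*(L:ℝ)/δ)*w = 1 := by
    have h8 : (8*(L:ℝ)/δ)*w = 8*((L:ℝ)*w)/δ := by ring
    rw [h8, hLw, show (8:ℝ)*(δ/8) = δ by ring, div_self hδ.ne']
  set B := Metric.closedBall y r with hB_def
  set x := sInf ((fun q => dist (p i) q) '' B) with hx_def
  clear_value x
  have hr2 : 2*r ≤ w := by
    have h16 : (0:ℝ) < 16*(L:ℝ) := by positivity
    have hr1' : r * (16*(L:ℝ)) ≤ δ := (le_div_iff₀ h16).mp hr1
    rw [hw_def, le_div_iff₀ (by positivity : (0:ℝ) < 8*(L:ℝ))]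
    nlinarith
  -- basic facts about x
  have hBfin : ((fun q => dist (p i) q) '' B).Finite := (B.toFinite).image _
  have hBne : B.Nonempty := ⟨y, Metric.mem_closedBall_self hr0⟩
  obtain ⟨q0, hq0B, hq0x⟩ := Set.Nonempty.csInf_mem (hBne.image _) hBfin
  have hq0d : dist (p i) q0 = x := by rw [hx_def]; exact hq0x
  have hx0 : 0 ≤ x := by rw [← hq0d]; exact dist_nonneg
  have hxle : ∀ q ∈ B, x ≤ dist (p i) q := fun q hq => by
    rw [hx_def]; exact csInf_le hBfin.bddBelow (Set.mem_image_of_mem _ hq)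
  have hgeo_up : ∀ z ∈ B, dist z (p i) ≤ x + 2*r := by
    intro z hz
    have h1 : dist (p i) z ≤ dist (p i) q0 + dist q0 y + dist y z := dist_triangle4 _ _ _ _
    have hq0y : dist q0 y ≤ r := Metric.mem_closedBall.mp hq0B
    have hyz : dist y z ≤ r := by rw [dist_comm]; exact Metric.mem_closedBall.mp hz
    rw [dist_comm]
    linarith
  have hgeo_lo : ∀ z ∈ B, x ≤ dist z (p i) := fun z hz => by
    rw [dist_comm]; exact hxle z hz
  -- the events
  set E1 : Set Ω := (β i) ⁻¹' (Set.Ico x (x+2*r)) with hE1_def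
  set E2 : Set Ω := (β i) ⁻¹' (Set.Ici (x+2*r)) with hE2_def
  set N : Set Ω := {ω : Ω | ((P ∩ B) \ ⋃ (j : Fin m) (_ : j < i), Pblk j ω).Nonempty} with hN_def
  have hsub1 : {ω | (Pblk i ω ∩ B).Nonempty ∧
      ∃ j, i < j ∧ (Pblk j ω ∩ B).Nonempty} ⊆ E1 ∩ N := by
    rintro ω ⟨⟨z, hzi, hzB⟩, j, hij, z', hz'j, hz'B⟩
    obtain ⟨hzP, hzpre, hzd⟩ := (hmemPblk ω i z).mp hzi
    obtain ⟨hz'P, hz'pre, _⟩ := (hmemPblk ω j z').mp hz'j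
    have hz'ni : z' ∉ Pblk i ω := hz'pre i hij
    have hβup : β i ω < x + 2*r := by
      by_contra hcon
      push_neg at hcon
      exact hz'ni ((hmemPblk ω i z').mpr ⟨hz'P, fun k hk => hz'pre k (hk.trans hij),
        le_trans (hgeo_up z' hz'B) hcon⟩)
    refine ⟨Set.mem_preimage.mpr (Set.mem_Ico.mpr ⟨le_trans (hgeo_lo z hzB) hzd, hβup⟩),
      ⟨z, ⟨hzP, hzB⟩, ?_⟩⟩
    simp only [Set.mem_iUnion, not_exists]
    exact fun k hk => hzpre k hk
  have hsub2 : E2 ∩ N ⊆ {ω | (Pblk i ω ∩ B).Nonempty ∧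
      ∀ j, i < j → ¬ (Pblk j ω ∩ B).Nonempty} := by
    rintro ω ⟨hE2m, z, hz⟩
    have hβ : x + 2*r ≤ β i ω := hE2m
    obtain ⟨⟨hzP, hzB⟩, hzU⟩ := hz
    simp only [Set.mem_iUnion, not_exists] at hzU
    have hzi : z ∈ Pblk i ω := (hmemPblk ω i z).mpr
      ⟨hzP, fun k hk => hzU k hk, le_trans (hgeo_up z hzB) hβ⟩
    refine ⟨⟨z, hzi, hzB⟩, ?_⟩
    rintro j hij ⟨z', hz'j, hz'B⟩
    obtain ⟨hz'P, hz'pre, _⟩ := (hmemPblk ω j z').mp hz'j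
    exact hz'pre i hij ((hmemPblk ω i z').mpr ⟨hz'P, fun k hk => hz'pre k (hk.trans hij),
      le_trans (hgeo_up z' hz'B) hβ⟩)
  -- determinism of the blocks
  have hdet : ∀ (ω : Ω) (n : ℕ) (h : n < m),
      Pblk ⟨n, h⟩ ω = blocksAux P p (fun k => β k ω) n := by
    intro ω n
    induction n using Nat.strong_induction_on with
    | _ n ih =>
      intro h
      ext z
      rw [hmemPblk ω ⟨n,h⟩ z]
      rw [show (z ∈ blocksAux P p (fun k => β k ω) n) ↔ _ from
        (Set.ext_iff.mp (blocksAux_def P p (fun k => β k ω) n) z)]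
      simp only [Set.mem_setOf_eq]
      constructor
      · rintro ⟨h1, h2, h3⟩
        refine ⟨h1, fun k hk => ?_, fun _ => h3⟩
        rw [← ih k hk (hk.trans h)]
        exact h2 ⟨k, hk.trans h⟩ (by exact hk)
      · rintro ⟨h1, h2, h3⟩
        refine ⟨h1, fun j hj => ?_, h3 h⟩
        have hjn : (j:ℕ) < n := hj
        have heq : Pblk j ω = blocksAux P p (fun k => β k ω) (j:ℕ) := by
          have h' := ih (j:ℕ) hjn j.isLt
          rwa [Fin.eta] at h'
        rw [heq]
        exact h2 (j:ℕ) hjn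
  -- N depends only on coordinates < i
  set T : Finset (Fin m) := Finset.filter (fun j => j < i) Finset.univ with hT_def
  set ext0 : ({j // j ∈ T} → ℝ) → (Fin m → ℝ) :=
    fun c j => if h : j ∈ T then c ⟨j, h⟩ else 0 with hext_def
  set tupT : Ω → ({j // j ∈ T} → ℝ) := fun ω j => β j.val ω with htup_def
  set M : Set ({j // j ∈ T} → ℝ) :=
    {c | ((P ∩ B) \ ⋃ (j : Fin m) (_ : j < i), blocksAux P p (ext0 c) (j:ℕ)).Nonempty}
    with hM_def
  have hNpre : N = tupT ⁻¹' M := by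
    ext ω
    have hblocks : ∀ j : Fin m, j < i → Pblk j ω = blocksAux P p (ext0 (tupT ω)) (j:ℕ) := by
      intro j hj
      have h1 : Pblk j ω = blocksAux P p (fun k => β k ω) (j:ℕ) := by
        have h' := hdet ω (j:ℕ) j.isLt
        rwa [Fin.eta] at h'
      rw [h1]
      refine blocksAux_congr P p (j:ℕ) _ _ (fun k hk => ?_)
      have hkT : k ∈ T := by
        simp only [hT_def, Finset.mem_filter, Finset.mem_univ, true_and]
        exact lt_of_le_of_lt hk hj
      simp only [hext_def, dif_pos hkT]; rfl
    have hU : (⋃ (j : Fin m) (_ : j < i), Pblk j ω) =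
        ⋃ (j : Fin m) (_ : j < i), blocksAux P p (ext0 (tupT ω)) (j:ℕ) :=
      Set.iUnion_congr fun j => Set.iUnion_congr fun hj => hblocks j hj
    show ((P ∩ B) \ ⋃ (j : Fin m) (_ : j < i), Pblk j ω).Nonempty ↔ _
    rw [hU]
    exact Iff.rfl
  have hextm : Measurable ext0 := by
    refine measurable_pi_lambda _ (fun j => ?_)
    by_cases h : j ∈ T
    · simp only [hext_def, dif_pos h]; exact measurable_pi_apply _
    · simp only [hext_def, dif_neg h]; exact measurable_const
  have hMmeas : MeasurableSet M := by
    have hMeq : M = ⋃ z : Z, ({c : {j // j ∈ T} → ℝ | z ∈ P ∩ B} ∩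
        ⋂ (j : Fin m) (_ : j < i), {c : {j // j ∈ T} → ℝ | z ∈ blocksAux P p (ext0 c) (j:ℕ)}ᶜ) := by
      ext c
      simp only [hM_def, Set.mem_setOf_eq, Set.mem_iUnion, Set.mem_inter_iff, Set.mem_iInter,
        Set.mem_compl_iff, Set.Nonempty, Set.mem_diff, not_exists]
    rw [hMeq]
    refine MeasurableSet.iUnion fun z => MeasurableSet.inter ?_
      (MeasurableSet.iInter fun j => MeasurableSet.iInter fun hj => ?_)
    · by_cases hz : z ∈ P ∩ B <;> simp [hz]
    · exact (hextm (blocksAux_measurableSet P p (j:ℕ) z)).compl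
  -- independence
  have hiT : i ∉ T := by simp [hT_def]
  have hdisj : Disjoint ({i} : Finset (Fin m)) T := Finset.disjoint_singleton_left.mpr hiT
  have hIF : ProbabilityTheory.IndepFun (β i) tupT μ := by
    have h0 := hindep.indepFun_finset {i} T hdisj hβmeas
    have h1 := h0.comp
      (measurable_pi_apply (⟨i, Finset.mem_singleton_self i⟩ : {j // j ∈ ({i} : Finset (Fin m))}))
      measurable_id
    exact h1
  have hprod1 : μ (E1 ∩ N) = μ E1 * μ N := by
    rw [hNpre, hE1_def]
    exact hIF.measure_inter_preimage_eq_mul _ _ measurableSet_Ico hMmeas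
  have hprod2 : μ (E2 ∩ N) = μ E2 * μ N := by
    rw [hNpre, hE2_def]
    exact hIF.measure_inter_preimage_eq_mul _ _ measurableSet_Ici hMmeas
  -- the law of β i
  set ν := volume.withDensity (fun u => ENNReal.ofReal (distDensity δ L u)) with hν_def
  have hlawB : ∀ s : Set ℝ, MeasurableSet s → μ (β i ⁻¹' s) = ν s := by
    intro s hs
    rw [← Measure.map_apply (hβmeas i) hs, hlaw i]
  -- integral helpers
  have hlowerI : ∀ a b v : ℝ, 0 ≤ v → (∀ u ∈ Set.Ico a b, v ≤ distDensity δ L u) →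
      ENNReal.ofReal (v * (b - a)) ≤ ν (Set.Ico a b) := by
    intro a b v hv hb
    rw [hν_def, withDensity_apply _ measurableSet_Ico, ← lintegral_indicator measurableSet_Ico]
    calc ENNReal.ofReal (v * (b-a)) = ENNReal.ofReal v * volume (Set.Ico a b) := by
          rw [Real.volume_Ico, ENNReal.ofReal_mul hv]
      _ = ∫⁻ u, (Set.Ico a b).indicator (fun _ => ENNReal.ofReal v) u := by
          rw [lintegral_indicator_const measurableSet_Ico]
      _ ≤ _ := by
          refine lintegral_mono fun u => ?_
          by_cases hu : u ∈ Set.Ico a b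
          · simp only [Set.indicator_of_mem hu]
            exact ENNReal.ofReal_le_ofReal (hb u hu)
          · simp [Set.indicator_of_notMem hu]
  have hupperI : ∀ a b v : ℝ, (∀ u ∈ Set.Ico a b, distDensity δ L u ≤ v) →
      ν (Set.Ico a b) ≤ ENNReal.ofReal v * ENNReal.ofReal (b - a) := by
    intro a b v hb
    rw [hν_def, withDensity_apply _ measurableSet_Ico, ← lintegral_indicator measurableSet_Ico]
    calc ∫⁻ u, (Set.Ico a b).indicator (fun u => ENNReal.ofReal (distDensity δ L u)) u
        ≤ ∫⁻ u, (Set.Ico a b).indicator (fun _ => ENNReal.ofReal v) u := by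
          refine lintegral_mono fun u => ?_
          by_cases hu : u ∈ Set.Ico a b
          · simp only [Set.indicator_of_mem hu]
            exact ENNReal.ofReal_le_ofReal (hb u hu)
          · simp [Set.indicator_of_notMem hu]
      _ = ENNReal.ofReal v * volume (Set.Ico a b) := lintegral_indicator_const measurableSet_Ico _
      _ = ENNReal.ofReal v * ENNReal.ofReal (b - a) := by rw [Real.volume_Ico]
  -- density values
  have hval_mid : ∀ (j : ℕ), (j:ℝ)+1 ≤ (L:ℝ)-1 →
      ∀ u ∈ Set.Ico (δ/8 + (j:ℝ)*w) (δ/8 + ((j:ℝ)+1)*w),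
      distDensity δ L u = (8*(L:ℝ)/δ) * (1/2:ℝ)^(j+1) := by
    intro j hj u hu
    obtain ⟨hu1, hu2⟩ := hu
    have hu8 : δ/8 ≤ u := le_trans (by nlinarith [hw.le, (by positivity : (0:ℝ) ≤ (j:ℝ))]) hu1
    have huu : u < δ/4 - w := by rw [hq]; nlinarith [hw]
    unfold distDensity
    rw [if_neg (by
      simp only [not_or, not_lt]
      exact ⟨hu8, by linarith [hw]⟩), if_neg (by
      rw [← hw_def]; exact not_le.mpr huu)]
    rw [← hw_def]
    have hfl : ⌊(u - δ/8)/w⌋ = (j:ℤ) := by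
      rw [Int.floor_eq_iff]
      constructor
      · rw [le_div_iff₀ hw]; push_cast; linarith
      · rw [div_lt_iff₀ hw]; push_cast; linarith
    rw [hfl]
    norm_num
  have hval_last : ∀ u ∈ Set.Ico (δ/8 + ((L:ℝ)-1)*w) (δ/8 + (L:ℝ)*w),
      distDensity δ L u = (8*(L:ℝ)/δ) * (2/2^L) := by
    intro u hu
    obtain ⟨hu1, hu2⟩ := hu
    have hL1 : (1:ℝ) ≤ (L:ℝ) := by exact_mod_cast (by omega : 1 ≤ L)
    have hu8 : δ/8 ≤ u := le_trans (by nlinarith [hw.le]) hu1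
    have hu4 : u < δ/4 := by
      have : δ/8 + (L:ℝ)*w = δ/4 := by rw [hLw]; ring
      linarith
    unfold distDensity
    rw [if_neg (by simp only [not_or, not_lt]; exact ⟨hu8, hu4.le⟩),
      if_pos (by rw [← hw_def, hq]; exact hu1)]
  -- the tail bound
  have htail : ∀ d : ℕ, d ≤ L - 1 →
      ENNReal.ofReal ((1/2:ℝ)^(L-1-d)) ≤ ν (Set.Ici (δ/8 + ((L-1-d : ℕ):ℝ)*w)) := by
    intro d
    induction d with
    | zero =>
      intro _
      have hcast : ((L-1-0:ℕ):ℝ) = (L:ℝ)-1 := by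
        rw [Nat.sub_zero, Nat.cast_sub (by omega : 1 ≤ L)]; norm_num
      rw [hcast]
      have h2L : (1/2:ℝ)^(L-1) = 2/2^L := by
        have h2 : (2:ℝ)^L = 2^(L-1)*2 := by
          rw [← pow_succ]
          congr 1
          omega
        rw [eq_div_iff (by positivity : (2:ℝ)^L ≠ 0), h2, ← mul_assoc, ← mul_pow]
        norm_num
      have hlen : (8*(L:ℝ)/δ) * (2/2^L) * ((δ/8 + (L:ℝ)*w) - (δ/8 + ((L:ℝ)-1)*w))
          = (1/2:ℝ)^(L-1) := by
        rw [h2L, show ((δ/8 + (L:ℝ)*w) - (δ/8 + ((L:ℝ)-1)*w)) = w by ring,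
          show (8*(L:ℝ)/δ) * (2/2^L) * w = (2/2^L) * ((8*(L:ℝ)/δ)*w) by ring, hcw, mul_one]
      calc ENNReal.ofReal ((1/2:ℝ)^(L-1))
          ≤ ν (Set.Ico (δ/8 + ((L:ℝ)-1)*w) (δ/8 + (L:ℝ)*w)) := by
            rw [← hlen]
            exact hlowerI _ _ _ (by positivity) (fun u hu => (hval_last u hu).ge)
        _ ≤ ν (Set.Ici (δ/8 + ((L:ℝ)-1)*w)) := measure_mono (fun u hu => hu.1)
    | succ d ih =>
      intro hd
      have hd' : d ≤ L-1 := by omega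
      have hjL : (L-1-(d+1)) + 1 = L-1-d := by omega
      set j : ℕ := L - 1 - (d+1) with hj_def
      clear_value j
      have hjb : (j:ℝ)+1 ≤ (L:ℝ)-1 := by
        have hh : j + 2 ≤ L := by omega
        have h2 : (j:ℝ) + 2 ≤ (L:ℝ) := by exact_mod_cast hh
        linarith
      have h1 : ENNReal.ofReal ((1/2:ℝ)^(j+1)) ≤
          ν (Set.Ico (δ/8 + (j:ℝ)*w) (δ/8 + ((j:ℝ)+1)*w)) := by
        have hlen : (8*(L:ℝ)/δ) * (1/2:ℝ)^(j+1) * ((δ/8 + ((j:ℝ)+1)*w) - (δ/8 + (j:ℝ)*w))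
            = (1/2:ℝ)^(j+1) := by
          rw [show ((δ/8 + ((j:ℝ)+1)*w) - (δ/8 + (j:ℝ)*w)) = w by ring,
            show (8*(L:ℝ)/δ) * (1/2:ℝ)^(j+1) * w = (1/2:ℝ)^(j+1) * ((8*(L:ℝ)/δ)*w) by ring,
            hcw, mul_one]
        rw [← hlen]
        exact hlowerI _ _ _ (by positivity) (fun u hu => (hval_mid j hjb u hu).ge)
      have h2 : ENNReal.ofReal ((1/2:ℝ)^(j+1)) ≤ ν (Set.Ici (δ/8 + ((j:ℝ)+1)*w)) := by
        have h' := ih hd'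
        rw [← hjL] at h'
        push_cast at h'
        exact h'
      have hdisj' : Disjoint (Set.Ico (δ/8 + (j:ℝ)*w) (δ/8 + ((j:ℝ)+1)*w))
          (Set.Ici (δ/8 + ((j:ℝ)+1)*w)) := by
        rw [Set.disjoint_left]
        rintro u ⟨_, h2'⟩ h3'
        exact absurd h2' (not_lt.mpr h3')
      have hle' : δ/8 + (j:ℝ)*w ≤ δ/8 + ((j:ℝ)+1)*w := by nlinarith [hw.le]
      calc ENNReal.ofReal ((1/2:ℝ)^j)
          = ENNReal.ofReal ((1/2:ℝ)^(j+1)) + ENNReal.ofReal ((1/2:ℝ)^(j+1)) := by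
            rw [← ENNReal.ofReal_add (by positivity) (by positivity)]
            congr 1
            rw [pow_succ]; ring
        _ ≤ ν (Set.Ico (δ/8 + (j:ℝ)*w) (δ/8 + ((j:ℝ)+1)*w))
            + ν (Set.Ici (δ/8 + ((j:ℝ)+1)*w)) := add_le_add h1 h2
        _ = ν (Set.Ico (δ/8 + (j:ℝ)*w) (δ/8 + ((j:ℝ)+1)*w) ∪ Set.Ici (δ/8 + ((j:ℝ)+1)*w)) :=
            (measure_union hdisj' measurableSet_Ici).symm
        _ = ν (Set.Ici (δ/8 + (j:ℝ)*w)) := by rw [Set.Ico_union_Ici_eq_Ici hle']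
  -- the floor indices
  set u0 := max x (δ/8) with hu0_def
  clear_value u0
  have hu0l : δ/8 ≤ u0 := by rw [hu0_def]; exact le_max_right _ _
  have hu0x : x ≤ u0 := by rw [hu0_def]; exact le_max_left _ _
  have hnear' : x < δ/8 + ((L:ℝ)-2)*w := hnear
  have hu0u : u0 < δ/8 + ((L:ℝ)-1)*w := by
    rw [hu0_def]
    apply max_lt
    · nlinarith [hw]
    · nlinarith [hw, (by exact_mod_cast (by omega : 2 ≤ L) : (2:ℝ) ≤ (L:ℝ))]
  set k : ℕ := (⌊(u0 - δ/8)/w⌋).toNat with hk_def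
  clear_value k
  have hfl0 : (0:ℤ) ≤ ⌊(u0 - δ/8)/w⌋ :=
    Int.floor_nonneg.mpr (div_nonneg (sub_nonneg.mpr hu0l) hw.le)
  have hkZ : (k:ℤ) = ⌊(u0 - δ/8)/w⌋ := by rw [hk_def]; exact Int.toNat_of_nonneg hfl0
  set s := max (x + 2*r) (δ/8) with hs_def
  clear_value s
  have hs_low : δ/8 ≤ s := by rw [hs_def]; exact le_max_right _ _
  have hts : x + 2*r ≤ s := by rw [hs_def]; exact le_max_left _ _
  have hs_up : s < δ/8 + ((L:ℝ)-1)*w := by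
    rw [hs_def]
    apply max_lt
    · nlinarith [hw]
    · nlinarith [hw, (by exact_mod_cast (by omega : 2 ≤ L) : (2:ℝ) ≤ (L:ℝ))]
  set ks : ℕ := (⌊(s - δ/8)/w⌋).toNat with hks_def
  clear_value ks
  have hfl0' : (0:ℤ) ≤ ⌊(s - δ/8)/w⌋ :=
    Int.floor_nonneg.mpr (div_nonneg (sub_nonneg.mpr hs_low) hw.le)
  have hksZ : (ks:ℤ) = ⌊(s - δ/8)/w⌋ := by rw [hks_def]; exact Int.toNat_of_nonneg hfl0'
  have hks_le : ks ≤ k + 1 := by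
    have hsu0 : s ≤ u0 + w := by
      rw [hs_def, hu0_def]
      apply max_le
      · linarith [le_max_left x (δ/8)]
      · linarith [le_max_right x (δ/8), hw.le]
    have hdiv : (s - δ/8)/w ≤ (u0 - δ/8)/w + 1 := by
      rw [div_add' _ _ _ hw.ne']
      apply div_le_div_of_nonneg_right ?_ hw.le
      · linarith
    have hff : ⌊(s - δ/8)/w⌋ ≤ ⌊(u0 - δ/8)/w⌋ + 1 := by
      calc ⌊(s - δ/8)/w⌋ ≤ ⌊(u0 - δ/8)/w + 1⌋ := Int.floor_le_floor hdiv
        _ = ⌊(u0 - δ/8)/w⌋ + 1 := by rw [Int.floor_add_one]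
    omega
  have hks_up : ks + 1 ≤ L - 1 := by
    have hdiv : (s - δ/8)/w < (L:ℝ) - 1 := by
      rw [div_lt_iff₀ hw]
      nlinarith [hs_up]
    have hff : ⌊(s - δ/8)/w⌋ < (L:ℤ) - 1 := by
      apply Int.floor_lt.mpr
      push_cast
      exact hdiv
    omega
  -- bound on μ E1
  have hE1bound : μ E1 ≤ ENNReal.ofReal ((8*(L:ℝ)/δ) * (1/2:ℝ)^(k+1)) * ENNReal.ofReal (2*r) := by
    have hpt : ∀ u ∈ Set.Ico x (x+2*r), distDensity δ L u ≤ (8*(L:ℝ)/δ) * (1/2:ℝ)^(k+1) := by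
      intro u hu
      obtain ⟨hu1, hu2⟩ := hu
      by_cases hu8 : u < δ/8
      · unfold distDensity
        rw [if_pos (Or.inl hu8)]
        positivity
      · push_neg at hu8
        have hu0u' : u0 ≤ u := by rw [hu0_def]; exact max_le hu1 hu8
        have huq : u < δ/4 - w := by rw [hq]; linarith [hts, hs_up]
        unfold distDensity
        rw [if_neg (by
          simp only [not_or, not_lt]
          exact ⟨hu8, by linarith [hw]⟩), if_neg (by
          rw [← hw_def]; exact not_le.mpr huq)]
        rw [← hw_def]
        apply mul_le_mul_of_nonneg_left _ (by positivity)
        apply pow_le_pow_of_le_one (by norm_num) (by norm_num)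
        have hmono : ⌊(u0 - δ/8)/w⌋ ≤ ⌊(u - δ/8)/w⌋ := by
          apply Int.floor_le_floor
          apply div_le_div_of_nonneg_right ?_ hw.le
          · linarith
        omega
    calc μ E1 = ν (Set.Ico x (x+2*r)) := hlawB _ measurableSet_Ico
      _ ≤ ENNReal.ofReal ((8*(L:ℝ)/δ) * (1/2:ℝ)^(k+1)) * ENNReal.ofReal ((x+2*r) - x) :=
          hupperI _ _ _ hpt
      _ = ENNReal.ofReal ((8*(L:ℝ)/δ) * (1/2:ℝ)^(k+1)) * ENNReal.ofReal (2*r) := by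
          congr 1
          ring_nf
  -- bound on μ E2
  have hE2bound : ENNReal.ofReal ((1/2:ℝ)^(k+2)) ≤ μ E2 := by
    have hsle : s ≤ δ/8 + ((ks:ℝ)+1)*w := by
      have h1 : (s - δ/8)/w < (ks:ℝ) + 1 := by
        have h0 := Int.lt_floor_add_one ((s - δ/8)/w)
        rw [← hksZ] at h0
        push_cast at h0
        exact h0
      rw [div_lt_iff₀ hw] at h1
      linarith
    have h3 : ENNReal.ofReal ((1/2:ℝ)^(ks+1)) ≤ ν (Set.Ici (δ/8 + ((ks:ℝ)+1)*w)) := by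
      have hd : L-1-(ks+1) ≤ L-1 := by omega
      have h' := htail (L-1-(ks+1)) hd
      have hnn : L-1-(L-1-(ks+1)) = ks+1 := by omega
      rw [hnn] at h'
      push_cast at h'
      exact h'
    calc ENNReal.ofReal ((1/2:ℝ)^(k+2)) ≤ ENNReal.ofReal ((1/2:ℝ)^(ks+1)) :=
        ENNReal.ofReal_le_ofReal (pow_le_pow_of_le_one (by norm_num) (by norm_num) (by omega))
      _ ≤ ν (Set.Ici (δ/8 + ((ks:ℝ)+1)*w)) := h3
      _ ≤ ν (Set.Ici (x + 2*r)) := measure_mono (Set.Ici_subset_Ici.mpr (le_trans hts hsle))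
      _ = μ E2 := (hlawB _ measurableSet_Ici).symm
  -- the key comparison
  have hkey : ENNReal.ofReal ((8*(L:ℝ)/δ) * (1/2:ℝ)^(k+1)) * ENNReal.ofReal (2*r)
      ≤ ENNReal.ofReal (32 * r * (L:ℝ) / δ) * ENNReal.ofReal ((1/2:ℝ)^(k+2)) := by
    rw [← ENNReal.ofReal_mul (by positivity), ← ENNReal.ofReal_mul (by positivity)]
    apply ENNReal.ofReal_le_ofReal
    apply le_of_eq
    rw [pow_succ]
    ring
  -- putting it together
  have hmain : μ {ω | (Pblk i ω ∩ B).Nonempty ∧ ∃ j, i < j ∧ (Pblk j ω ∩ B).Nonempty}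
      ≤ ENNReal.ofReal (32 * r * (L:ℝ) / δ) *
        μ {ω | (Pblk i ω ∩ B).Nonempty ∧ ∀ j, i < j → ¬ (Pblk j ω ∩ B).Nonempty} := by
    calc μ {ω | (Pblk i ω ∩ B).Nonempty ∧ ∃ j, i < j ∧ (Pblk j ω ∩ B).Nonempty}
        ≤ μ (E1 ∩ N) := measure_mono hsub1
      _ = μ E1 * μ N := hprod1
      _ ≤ (ENNReal.ofReal ((8*(L:ℝ)/δ) * (1/2:ℝ)^(k+1)) * ENNReal.ofReal (2*r)) * μ N :=
          mul_le_mul_left hE1bound _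
      _ ≤ (ENNReal.ofReal (32 * r * (L:ℝ) / δ) * ENNReal.ofReal ((1/2:ℝ)^(k+2))) * μ N :=
          mul_le_mul_left hkey _
      _ = ENNReal.ofReal (32 * r * (L:ℝ) / δ) * (ENNReal.ofReal ((1/2:ℝ)^(k+2)) * μ N) := by
          rw [mul_assoc]
      _ ≤ ENNReal.ofReal (32 * r * (L:ℝ) / δ) * (μ E2 * μ N) :=
          mul_le_mul_right (mul_le_mul_left hE2bound _) _
      _ = ENNReal.ofReal (32 * r * (L:ℝ) / δ) * μ (E2 ∩ N) := by rw [hprod2]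
      _ ≤ ENNReal.ofReal (32 * r * (L:ℝ) / δ) *
          μ {ω | (Pblk i ω ∩ B).Nonempty ∧ ∀ j, i < j → ¬ (Pblk j ω ∩ B).Nonempty} :=
          mul_le_mul_right (measure_mono hsub2) _
  have hC0 : 0 ≤ 32 * r * (L:ℝ) / δ := by positivity
  have hfin : ENNReal.ofReal (32 * r * (L:ℝ) / δ) *
      μ {ω | (Pblk i ω ∩ B).Nonempty ∧ ∀ j, i < j → ¬ (Pblk j ω ∩ B).Nonempty} ≠ ⊤ :=
    ENNReal.mul_ne_top ENNReal.ofReal_ne_top (measure_ne_top μ _)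
  calc (μ {ω | (Pblk i ω ∩ B).Nonempty ∧ ∃ j, i < j ∧ (Pblk j ω ∩ B).Nonempty}).toReal
      ≤ (ENNReal.ofReal (32 * r * (L:ℝ) / δ) *
        μ {ω | (Pblk i ω ∩ B).Nonempty ∧ ∀ j, i < j → ¬ (Pblk j ω ∩ B).Nonempty}).toReal :=
        ENNReal.toReal_mono hfin hmain
    _ = (32 * r * (L:ℝ) / δ) *
        (μ {ω | (Pblk i ω ∩ B).Nonempty ∧ ∀ j, i < j → ¬ (Pblk j ω ∩ B).Nonempty}).toReal := by
        rw [ENNReal.toReal_mul, ENNReal.toReal_ofReal hC0]
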